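/- For each fixed x > 0, the Gamma(θ,1) distribution function F(x,θ) := (1/Γ(θ)) ∫₀ˣ t^{θ−1} e^{−t} dt, viewed as a function of the shape parameter θ ∈ (0,∞), is continuous, strictly decreasing, tends to 1 as θ → 0⁺ and tends to 0 as θ → ∞; consequently θ ↦ F(x,θ) maps (0,∞) onto (0,1). -/

import Mathlib

open MeasureTheory Filter Set Topology

lemma gcdf_integrable {θ : ℝ} (hθ : 0 < θ) :
    IntegrableOn (fun t : ℝ => t ^ (θ - 1) * Real.exp (-t)) (Ioi 0) := by
  have h := Real.GammaIntegral_convergent hθ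
  simpa [mul_comm] using h

lemma gcdf_split {x θ : ℝ} (hx : 0 < x) (hθ : 0 < θ) :
    Real.Gamma θ = (∫ t in Ioc 0 x, t ^ (θ - 1) * Real.exp (-t))
      + ∫ t in Ioi x, t ^ (θ - 1) * Real.exp (-t) := by
  have h := Real.Gamma_eq_integral hθ
  have h2 : Real.Gamma θ = ∫ t in Ioi 0, t ^ (θ - 1) * Real.exp (-t) := by
    rw [h]; exact setIntegral_congr_fun measurableSet_Ioi fun t _ => mul_comm _ _
  rw [h2, ← Ioc_union_Ioi_eq_Ioi hx.le,
    setIntegral_union (Ioc_disjoint_Ioi le_rfl) measurableSet_Ioi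
      ((gcdf_integrable hθ).mono_set Ioc_subset_Ioi_self)
      ((gcdf_integrable hθ).mono_set (Ioi_subset_Ioi hx.le))]

lemma pos_setIntegral {a b : ℝ} (hab : a < b) {g : ℝ → ℝ} (hg : IntegrableOn g (Ioc a b))
    (hpos : ∀ t ∈ Ioo a b, 0 < g t) : 0 < ∫ t in Ioc a b, g t := by
  rw [← intervalIntegral.integral_of_le hab.le]
  refine intervalIntegral.intervalIntegral_pos_of_pos_on ?_ hpos hab
  rwa [intervalIntegrable_iff_integrableOn_Ioc_of_le hab.le]

lemma gcdf_A_pos {x θ : ℝ} (hx : 0 < x) (hθ : 0 < θ) :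
    0 < ∫ t in Ioc 0 x, t ^ (θ - 1) * Real.exp (-t) := by
  refine pos_setIntegral hx ((gcdf_integrable hθ).mono_set Ioc_subset_Ioi_self) ?_
  intro t ht; have := ht.1; positivity

lemma gcdf_B_pos {x θ : ℝ} (hx : 0 < x) (hθ : 0 < θ) :
    0 < ∫ t in Ioi x, t ^ (θ - 1) * Real.exp (-t) := by
  have hI : IntegrableOn (fun t : ℝ => t ^ (θ - 1) * Real.exp (-t)) (Ioi x) :=
    (gcdf_integrable hθ).mono_set (Ioi_subset_Ioi hx.le)
  have h1 : 0 < ∫ t in Ioc x (x + 1), t ^ (θ - 1) * Real.exp (-t) := by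
    refine pos_setIntegral (by linarith) (hI.mono_set Ioc_subset_Ioi_self) ?_
    intro t ht; have := hx.trans ht.1; positivity
  refine h1.trans_le (setIntegral_mono_set hI ?_ (HasSubset.Subset.eventuallyLE Ioc_subset_Ioi_self))
  filter_upwards [ae_restrict_mem measurableSet_Ioi] with t ht
  have := hx.trans ht; positivity

lemma gcdf_A_lt {x θ₁ θ₂ : ℝ} (hx : 0 < x) (hθ₁ : 0 < θ₁) (h12 : θ₁ < θ₂) :
    (∫ t in Ioc 0 x, t ^ (θ₂ - 1) * Real.exp (-t)) <
      x ^ (θ₂ - θ₁) * ∫ t in Ioc 0 x, t ^ (θ₁ - 1) * Real.exp (-t) := by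
  have hθ₂ : 0 < θ₂ := hθ₁.trans h12
  have hI1 : IntegrableOn (fun t : ℝ => t ^ (θ₁ - 1) * Real.exp (-t)) (Ioc 0 x) :=
    (gcdf_integrable hθ₁).mono_set Ioc_subset_Ioi_self
  have hI2 : IntegrableOn (fun t : ℝ => t ^ (θ₂ - 1) * Real.exp (-t)) (Ioc 0 x) :=
    (gcdf_integrable hθ₂).mono_set Ioc_subset_Ioi_self
  have key : 0 < ∫ t in Ioc 0 x,
      (x ^ (θ₂ - θ₁) * (t ^ (θ₁ - 1) * Real.exp (-t)) - t ^ (θ₂ - 1) * Real.exp (-t)) := by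
    refine pos_setIntegral hx ((hI1.const_mul _).sub hI2) ?_
    intro t ht
    have ht0 : 0 < t := ht.1
    have h1 : t ^ (θ₂ - 1) = t ^ (θ₁ - 1) * t ^ (θ₂ - θ₁) := by
      rw [← Real.rpow_add ht0]; ring_nf
    have h2 : t ^ (θ₂ - θ₁) < x ^ (θ₂ - θ₁) :=
      Real.rpow_lt_rpow ht0.le ht.2 (by linarith)
    have h3 : 0 < t ^ (θ₁ - 1) := Real.rpow_pos_of_pos ht0 _
    have h4 : 0 < Real.exp (-t) := Real.exp_pos _
    rw [h1]
    nlinarith [mul_pos (mul_pos h3 h4) (sub_pos.mpr h2)]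
  rw [integral_sub (hI1.const_mul _) hI2, integral_const_mul _ _] at key
  linarith

lemma gcdf_B_lt {x θ₁ θ₂ : ℝ} (hx : 0 < x) (hθ₁ : 0 < θ₁) (h12 : θ₁ < θ₂) :
    (∫ t in Ioi x, t ^ (θ₁ - 1) * Real.exp (-t)) <
      x ^ (θ₁ - θ₂) * ∫ t in Ioi x, t ^ (θ₂ - 1) * Real.exp (-t) := by
  have hθ₂ : 0 < θ₂ := hθ₁.trans h12
  have hI1 : IntegrableOn (fun t : ℝ => t ^ (θ₁ - 1) * Real.exp (-t)) (Ioi x) :=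
    (gcdf_integrable hθ₁).mono_set (Ioi_subset_Ioi hx.le)
  have hI2 : IntegrableOn (fun t : ℝ => t ^ (θ₂ - 1) * Real.exp (-t)) (Ioi x) :=
    (gcdf_integrable hθ₂).mono_set (Ioi_subset_Ioi hx.le)
  have hg : ∀ t ∈ Ioi x,
      0 < x ^ (θ₁ - θ₂) * (t ^ (θ₂ - 1) * Real.exp (-t)) - t ^ (θ₁ - 1) * Real.exp (-t) := by
    intro t ht
    have ht0 : 0 < t := hx.trans ht
    have h1 : t ^ (θ₁ - 1) = t ^ (θ₂ - 1) * t ^ (θ₁ - θ₂) := by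
      rw [← Real.rpow_add ht0]; ring_nf
    have h2 : t ^ (θ₁ - θ₂) < x ^ (θ₁ - θ₂) :=
      Real.rpow_lt_rpow_of_neg hx ht (by linarith)
    have h3 : 0 < t ^ (θ₂ - 1) := Real.rpow_pos_of_pos ht0 _
    have h4 : 0 < Real.exp (-t) := Real.exp_pos _
    rw [h1]
    nlinarith [mul_pos (mul_pos h3 h4) (sub_pos.mpr h2)]
  have hgI : IntegrableOn (fun t : ℝ =>
      x ^ (θ₁ - θ₂) * (t ^ (θ₂ - 1) * Real.exp (-t)) - t ^ (θ₁ - 1) * Real.exp (-t)) (Ioi x) :=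
    (hI2.const_mul _).sub hI1
  have key : 0 < ∫ t in Ioi x,
      (x ^ (θ₁ - θ₂) * (t ^ (θ₂ - 1) * Real.exp (-t)) - t ^ (θ₁ - 1) * Real.exp (-t)) := by
    have h1 : 0 < ∫ t in Ioc x (x + 1),
        (x ^ (θ₁ - θ₂) * (t ^ (θ₂ - 1) * Real.exp (-t)) - t ^ (θ₁ - 1) * Real.exp (-t)) := by
      refine pos_setIntegral (by linarith) (hgI.mono_set Ioc_subset_Ioi_self) ?_
      intro t ht; exact hg t ht.1
    refine h1.trans_le (setIntegral_mono_set hgI ?_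
      (HasSubset.Subset.eventuallyLE Ioc_subset_Ioi_self))
    filter_upwards [ae_restrict_mem measurableSet_Ioi] with t ht
    exact (hg t ht).le
  rw [integral_sub (hI2.const_mul _) hI1, integral_const_mul _ _] at key
  linarith

lemma gcdf_measurable (θ : ℝ) : Measurable (fun t : ℝ => t ^ (θ - 1) * Real.exp (-t)) :=
  (measurable_id.pow_const _).mul (Real.measurable_exp.comp measurable_neg)

lemma gcdf_contA {x : ℝ} (hx : 0 < x) {θ₀ : ℝ} (hθ₀ : 0 < θ₀) :
    ContinuousAt (fun θ : ℝ => ∫ t in Ioc 0 x, t ^ (θ - 1) * Real.exp (-t)) θ₀ := by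
  set a : ℝ := θ₀ / 2 with ha
  set b : ℝ := θ₀ + 1 with hb
  have ha0 : 0 < a := by positivity
  have hmem : Ioo a b ∈ 𝓝 θ₀ := Ioo_mem_nhds (by simp [ha]; linarith) (by simp [hb])
  refine continuousAt_of_dominated (F := fun θ t => t ^ (θ - 1) * Real.exp (-t))
    (bound := fun t => t ^ (a - 1) + t ^ (b - 1)) ?_ ?_ ?_ ?_
  · exact Eventually.of_forall fun θ => (gcdf_measurable θ).aestronglyMeasurable
  · filter_upwards [hmem] with θ hθ
    obtain ⟨hθ1, hθ2⟩ := hθ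
    filter_upwards [ae_restrict_mem measurableSet_Ioc] with t ht
    have ht0 : 0 < t := ht.1
    have he : Real.exp (-t) ≤ 1 := Real.exp_le_one_iff.mpr (by linarith)
    have hb1 : t ^ (θ - 1) ≤ t ^ (a - 1) + t ^ (b - 1) := by
      rcases le_or_gt t 1 with h | h
      · have := Real.rpow_le_rpow_of_exponent_ge ht0 h (by linarith : a - 1 ≤ θ - 1)
        have h2 : (0:ℝ) ≤ t ^ (b - 1) := (Real.rpow_pos_of_pos ht0 _).le
        linarith
      · have := Real.rpow_le_rpow_of_exponent_le h.le (by linarith : θ - 1 ≤ b - 1)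
        have h2 : (0:ℝ) ≤ t ^ (a - 1) := (Real.rpow_pos_of_pos ht0 _).le
        linarith
    have hp : 0 < t ^ (θ - 1) := Real.rpow_pos_of_pos ht0 _
    rw [Real.norm_eq_abs, abs_of_nonneg (by positivity)]
    calc t ^ (θ - 1) * Real.exp (-t) ≤ t ^ (θ - 1) * 1 :=
          mul_le_mul_of_nonneg_left he hp.le
      _ = t ^ (θ - 1) := mul_one _
      _ ≤ _ := hb1
  · have h1 : IntegrableOn (fun t : ℝ => t ^ (a - 1)) (Ioc 0 x) := by
      rw [← intervalIntegrable_iff_integrableOn_Ioc_of_le hx.le]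
      exact intervalIntegral.intervalIntegrable_rpow' (by linarith)
    have h2 : IntegrableOn (fun t : ℝ => t ^ (b - 1)) (Ioc 0 x) := by
      rw [← intervalIntegrable_iff_integrableOn_Ioc_of_le hx.le]
      exact intervalIntegral.intervalIntegrable_rpow' (by simp [hb]; linarith)
    exact h1.add h2
  · filter_upwards [ae_restrict_mem measurableSet_Ioc] with t ht
    have ht0 : t ≠ 0 := ne_of_gt ht.1
    exact ((Real.continuousAt_const_rpow ht0).comp
      (continuousAt_id.sub continuousAt_const)).mul continuousAt_const

lemma gcdf_A_le {x θ : ℝ} (hx : 0 < x) (hθ : 1 ≤ θ) :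
    (∫ t in Ioc 0 x, t ^ (θ - 1) * Real.exp (-t)) ≤ x ^ θ := by
  have h1 : (∫ t in Ioc 0 x, t ^ (θ - 1) * Real.exp (-t)) ≤ ∫ _ in Ioc 0 x, x ^ (θ - 1) := by
    refine setIntegral_mono_on
      ((gcdf_integrable (by linarith)).mono_set Ioc_subset_Ioi_self)
      (integrableOn_const measure_Ioc_lt_top.ne) measurableSet_Ioc ?_
    intro t ht
    have ht0 : 0 < t := ht.1
    calc t ^ (θ - 1) * Real.exp (-t) ≤ t ^ (θ - 1) * 1 :=
        mul_le_mul_of_nonneg_left (Real.exp_le_one_iff.mpr (by linarith))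
          (Real.rpow_pos_of_pos ht0 _).le
      _ = t ^ (θ - 1) := mul_one _
      _ ≤ x ^ (θ - 1) := Real.rpow_le_rpow ht0.le ht.2 (by linarith)
  have h2 : (∫ _ in Ioc 0 x, x ^ (θ - 1)) = x ^ θ := by
    have e : x ^ θ = x ^ (1 : ℝ) * x ^ (θ - 1) := by rw [← Real.rpow_add hx]; ring_nf
    rw [Real.rpow_one] at e
    rw [setIntegral_const, measureReal_def, Real.volume_Ioc, smul_eq_mul, ENNReal.toReal_ofReal (by linarith),
      sub_zero, e]
  linarith

lemma gcdf_Gamma_ge {x θ : ℝ} (hx : 0 < x) (hθ : 1 ≤ θ) :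
    (2 * x) ^ (θ - 1) * Real.exp (-(2 * x + 1)) ≤ Real.Gamma θ := by
  have hθ0 : 0 < θ := by linarith
  have h2x : 0 < 2 * x := by linarith
  have hGam : Real.Gamma θ = ∫ t in Ioi 0, t ^ (θ - 1) * Real.exp (-t) := by
    rw [Real.Gamma_eq_integral hθ0]
    exact setIntegral_congr_fun measurableSet_Ioi fun t _ => mul_comm _ _
  have hsub : Ioc (2 * x) (2 * x + 1) ⊆ Ioi 0 := fun t ht => h2x.trans ht.1
  have h1 : (∫ t in Ioc (2 * x) (2 * x + 1), t ^ (θ - 1) * Real.exp (-t)) ≤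
      ∫ t in Ioi 0, t ^ (θ - 1) * Real.exp (-t) := by
    refine setIntegral_mono_set (gcdf_integrable hθ0) ?_ (HasSubset.Subset.eventuallyLE hsub)
    filter_upwards [ae_restrict_mem measurableSet_Ioi] with t ht
    have ht0 : (0:ℝ) < t := ht
    positivity
  have h2 : (∫ _ in Ioc (2 * x) (2 * x + 1), (2 * x) ^ (θ - 1) * Real.exp (-(2 * x + 1))) ≤
      ∫ t in Ioc (2 * x) (2 * x + 1), t ^ (θ - 1) * Real.exp (-t) := by
    refine setIntegral_mono_on (integrableOn_const measure_Ioc_lt_top.ne)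
      ((gcdf_integrable hθ0).mono_set hsub) measurableSet_Ioc ?_
    intro t ht
    have h3 : (2 * x) ^ (θ - 1) ≤ t ^ (θ - 1) := Real.rpow_le_rpow h2x.le ht.1.le (by linarith)
    have h4 : Real.exp (-(2 * x + 1)) ≤ Real.exp (-t) := Real.exp_le_exp.mpr (by linarith [ht.2])
    have h5 : (0:ℝ) ≤ (2 * x) ^ (θ - 1) := (Real.rpow_pos_of_pos h2x _).le
    exact mul_le_mul h3 h4 (Real.exp_pos _).le (h5.trans h3)
  have h6 : (∫ _ in Ioc (2 * x) (2 * x + 1), (2 * x) ^ (θ - 1) * Real.exp (-(2 * x + 1)))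
      = (2 * x) ^ (θ - 1) * Real.exp (-(2 * x + 1)) := by
    rw [setIntegral_const, measureReal_def, Real.volume_Ioc, smul_eq_mul]
    norm_num
  rw [hGam]; rw [h6] at h2; linarith

lemma gcdf_tendsto_atTop {x : ℝ} (hx : 0 < x) :
    Tendsto (fun θ : ℝ => (Real.Gamma θ)⁻¹ * ∫ t in Ioc 0 x, t ^ (θ - 1) * Real.exp (-t))
      atTop (𝓝 0) := by
  have h2x : (0:ℝ) < 2 * x := by linarith
  set C : ℝ := 2 * x * Real.exp (2 * x + 1) with hC
  refine squeeze_zero' (g := fun θ : ℝ => C * (1/2 : ℝ) ^ (θ : ℝ)) ?_ ?_ ?_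
  · filter_upwards [eventually_ge_atTop (1:ℝ)] with θ hθ
    have hθ0 : (0:ℝ) < θ := by linarith
    have := gcdf_A_pos hx hθ0
    have := Real.Gamma_pos_of_pos hθ0
    positivity
  · filter_upwards [eventually_ge_atTop (1:ℝ)] with θ hθ
    have hθ0 : (0:ℝ) < θ := by linarith
    have hG : (2 * x) ^ (θ - 1) * Real.exp (-(2 * x + 1)) ≤ Real.Gamma θ := gcdf_Gamma_ge hx hθ
    have hGpos : 0 < Real.Gamma θ := Real.Gamma_pos_of_pos hθ0
    have hdpos : (0:ℝ) < (2 * x) ^ (θ - 1) * Real.exp (-(2 * x + 1)) := by positivity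
    have hA : (∫ t in Ioc 0 x, t ^ (θ - 1) * Real.exp (-t)) ≤ x ^ θ := gcdf_A_le hx hθ
    have hApos : 0 < ∫ t in Ioc 0 x, t ^ (θ - 1) * Real.exp (-t) := gcdf_A_pos hx hθ0
    have step1 : (Real.Gamma θ)⁻¹ * ∫ t in Ioc 0 x, t ^ (θ - 1) * Real.exp (-t) ≤
        ((2 * x) ^ (θ - 1) * Real.exp (-(2 * x + 1)))⁻¹ * x ^ θ := by
      have hinv : (Real.Gamma θ)⁻¹ ≤ ((2 * x) ^ (θ - 1) * Real.exp (-(2 * x + 1)))⁻¹ :=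
        inv_anti₀ hdpos hG
      calc (Real.Gamma θ)⁻¹ * ∫ t in Ioc 0 x, t ^ (θ - 1) * Real.exp (-t)
          ≤ ((2 * x) ^ (θ - 1) * Real.exp (-(2 * x + 1)))⁻¹ *
            ∫ t in Ioc 0 x, t ^ (θ - 1) * Real.exp (-t) :=
            mul_le_mul_of_nonneg_right hinv hApos.le
        _ ≤ _ := mul_le_mul_of_nonneg_left hA (by positivity)
    have heq : ((2 * x) ^ (θ - 1) * Real.exp (-(2 * x + 1)))⁻¹ * x ^ θ =
        C * (1/2 : ℝ) ^ (θ : ℝ) := by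
      have e1 : ((1:ℝ)/2) ^ (θ:ℝ) = x ^ θ / (2 * x) ^ θ := by
        rw [← Real.div_rpow hx.le h2x.le]
        congr 1
        field_simp
      have e2 : (2 * x) ^ (θ - 1) = (2 * x) ^ θ / (2 * x) := by
        rw [Real.rpow_sub h2x, Real.rpow_one]
      have e3 : (0:ℝ) < (2 * x) ^ θ := Real.rpow_pos_of_pos h2x _
      rw [e1, e2, hC, Real.exp_neg]
      field_simp
    rw [heq] at step1
    exact step1
  · have := (tendsto_rpow_atTop_of_base_lt_one (1/2) (by norm_num) (by norm_num)).const_mul C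
    simpa using this

lemma gcdf_Gamma_tendsto_atTop : Tendsto Real.Gamma (𝓝[>] (0:ℝ)) atTop := by
  have hc : ContinuousAt (fun θ : ℝ => Real.Gamma (θ + 1)) 0 := by
    refine (Real.differentiableAt_Gamma ?_).continuousAt.comp
      (continuousAt_id.add continuousAt_const)
    intro m
    have h0 : (0:ℝ) ≤ (m:ℝ) := Nat.cast_nonneg m
    intro h
    linarith
  have h1 : Tendsto (fun θ : ℝ => Real.Gamma (θ + 1)) (𝓝[>] (0:ℝ)) (𝓝 1) := by
    have := hc.tendsto.mono_left (nhdsWithin_le_nhds (s := Ioi (0:ℝ)))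
    simpa [Real.Gamma_one] using this
  have h2 : Tendsto (fun θ : ℝ => Real.Gamma (θ + 1) * θ⁻¹) (𝓝[>] (0:ℝ)) atTop :=
    Tendsto.pos_mul_atTop one_pos h1 tendsto_inv_nhdsGT_zero
  refine h2.congr' ?_
  filter_upwards [self_mem_nhdsWithin] with θ (hθ : (0:ℝ) < θ)
  rw [Real.Gamma_add_one hθ.ne']
  field_simp

lemma gcdf_tendsto_zero_right {x : ℝ} (hx : 0 < x) :
    Tendsto (fun θ : ℝ => (Real.Gamma θ)⁻¹ * ∫ t in Ioc 0 x, t ^ (θ - 1) * Real.exp (-t))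
      (𝓝[>] (0:ℝ)) (𝓝 1) := by
  set M : ℝ := (1 + x⁻¹) * ∫ t in Ioi x, Real.exp (-t) with hM
  have hIexp : IntegrableOn (fun t : ℝ => Real.exp (-t)) (Ioi x) := by
    have := exp_neg_integrableOn_Ioi x (one_pos)
    simpa using this
  have hBle : ∀ θ : ℝ, 0 < θ → θ ≤ 1 →
      (∫ t in Ioi x, t ^ (θ - 1) * Real.exp (-t)) ≤ M := by
    intro θ hθ0 hθ1
    have h1 : (∫ t in Ioi x, t ^ (θ - 1) * Real.exp (-t)) ≤
        ∫ t in Ioi x, (1 + x⁻¹) * Real.exp (-t) := by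
      refine setIntegral_mono_on ((gcdf_integrable hθ0).mono_set (Ioi_subset_Ioi hx.le))
        (hIexp.const_mul _) measurableSet_Ioi ?_
      intro t ht
      have htx : x ≤ t := (le_of_lt ht)
      have ht0 : 0 < t := hx.trans_le htx
      have hb : t ^ (θ - 1) ≤ 1 + x⁻¹ := by
        rcases le_or_gt 1 t with h | h
        · have h2 : t ^ (θ - 1) ≤ t ^ (0:ℝ) := Real.rpow_le_rpow_of_exponent_le h (by linarith)
          rw [Real.rpow_zero] at h2
          have : (0:ℝ) ≤ x⁻¹ := by positivity
          linarith
        · have h2 : t ^ (θ - 1) ≤ t ^ (-1:ℝ) :=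
            Real.rpow_le_rpow_of_exponent_ge ht0 h.le (by linarith)
          rw [Real.rpow_neg_one] at h2
          have h3 : t⁻¹ ≤ x⁻¹ := inv_anti₀ hx htx
          linarith
      exact mul_le_mul_of_nonneg_right hb (Real.exp_pos _).le
    rwa [integral_const_mul] at h1
  have hGtop := gcdf_Gamma_tendsto_atTop
  have hzero : Tendsto (fun θ : ℝ => (Real.Gamma θ)⁻¹ *
      ∫ t in Ioi x, t ^ (θ - 1) * Real.exp (-t)) (𝓝[>] (0:ℝ)) (𝓝 0) := by
    refine squeeze_zero' (g := fun θ : ℝ => M * (Real.Gamma θ)⁻¹) ?_ ?_ ?_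
    · filter_upwards [self_mem_nhdsWithin] with θ (hθ : (0:ℝ) < θ)
      have := gcdf_B_pos hx hθ
      have := Real.Gamma_pos_of_pos hθ
      positivity
    · filter_upwards [Ioc_mem_nhdsGT_of_mem ⟨le_refl (0:ℝ), zero_lt_one⟩] with θ hθ
      have hθ0 : (0:ℝ) < θ := hθ.1
      have hG : 0 < Real.Gamma θ := Real.Gamma_pos_of_pos hθ0
      have := hBle θ hθ0 hθ.2
      calc (Real.Gamma θ)⁻¹ * ∫ t in Ioi x, t ^ (θ - 1) * Real.exp (-t)
          ≤ (Real.Gamma θ)⁻¹ * M := mul_le_mul_of_nonneg_left this (by positivity)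
        _ = M * (Real.Gamma θ)⁻¹ := mul_comm _ _
    · have := (hGtop.inv_tendsto_atTop).const_mul M
      simpa using this
  have hfinal : Tendsto (fun θ : ℝ => 1 - (Real.Gamma θ)⁻¹ *
      ∫ t in Ioi x, t ^ (θ - 1) * Real.exp (-t)) (𝓝[>] (0:ℝ)) (𝓝 1) := by
    have := tendsto_const_nhds (α := ℝ) (x := (1:ℝ)) (f := 𝓝[>] (0:ℝ)).sub hzero
    simpa using this
  refine hfinal.congr' ?_
  filter_upwards [self_mem_nhdsWithin] with θ (hθ : (0:ℝ) < θ)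
  have hsplit := gcdf_split hx hθ
  have hG : 0 < Real.Gamma θ := Real.Gamma_pos_of_pos hθ
  field_simp
  linarith [hsplit]

/-- For fixed `x > 0`, the Gamma(θ,1) distribution function
`F(x,θ) = Γ(θ)⁻¹ ∫₀ˣ t^{θ−1} e^{−t} dt` is, as a function of the shape `θ ∈ (0,∞)`,
continuous, strictly decreasing, tends to `1` as `θ → 0⁺` and to `0` as `θ → ∞`;
consequently `θ ↦ F(x,θ)` maps `(0,∞)` onto `(0,1)`. -/
theorem gamma_cdf_in_shape_parameter (x : ℝ) (hx : 0 < x)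
    (F : ℝ → ℝ)
    (hF : ∀ θ : ℝ, F θ = (Real.Gamma θ)⁻¹ * ∫ t in (0 : ℝ)..x, t ^ (θ - 1) * Real.exp (-t)) :
    ContinuousOn F (Set.Ioi (0 : ℝ)) ∧
    StrictAntiOn F (Set.Ioi (0 : ℝ)) ∧
    Tendsto F (𝓝[>] (0 : ℝ)) (𝓝 1) ∧
    Tendsto F atTop (𝓝 0) ∧
    F '' Set.Ioi (0 : ℝ) = Set.Ioo (0 : ℝ) 1 := by
  have hFeq : F = fun θ : ℝ =>
      (Real.Gamma θ)⁻¹ * ∫ t in Ioc 0 x, t ^ (θ - 1) * Real.exp (-t) := by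
    funext θ
    rw [hF θ, intervalIntegral.integral_of_le hx.le]
  have hcont : ContinuousOn F (Set.Ioi (0 : ℝ)) := by
    rw [hFeq]
    intro θ hθ
    have hθ0 : (0:ℝ) < θ := hθ
    have hGd : DifferentiableAt ℝ Real.Gamma θ := by
      refine Real.differentiableAt_Gamma ?_
      intro m
      have h0 : (0:ℝ) ≤ (m:ℝ) := Nat.cast_nonneg m
      intro h
      rw [h] at hθ0
      linarith
    have hGne : Real.Gamma θ ≠ 0 := (Real.Gamma_pos_of_pos hθ0).ne'
    exact ((hGd.continuousAt.inv₀ hGne).mul (gcdf_contA hx hθ0)).continuousWithinAt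
  have hanti : StrictAntiOn F (Set.Ioi (0 : ℝ)) := by
    intro θ₁ h1 θ₂ h2 h12
    have hθ₁ : (0:ℝ) < θ₁ := h1
    have hθ₂ : (0:ℝ) < θ₂ := h2
    rw [hFeq]
    simp only
    set A1 := ∫ t in Ioc 0 x, t ^ (θ₁ - 1) * Real.exp (-t) with hA1
    set A2 := ∫ t in Ioc 0 x, t ^ (θ₂ - 1) * Real.exp (-t) with hA2
    set B1 := ∫ t in Ioi x, t ^ (θ₁ - 1) * Real.exp (-t) with hB1
    set B2 := ∫ t in Ioi x, t ^ (θ₂ - 1) * Real.exp (-t) with hB2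
    have hA1p : 0 < A1 := gcdf_A_pos hx hθ₁
    have hA2p : 0 < A2 := gcdf_A_pos hx hθ₂
    have hB1p : 0 < B1 := gcdf_B_pos hx hθ₁
    have hB2p : 0 < B2 := gcdf_B_pos hx hθ₂
    have hG1 : Real.Gamma θ₁ = A1 + B1 := gcdf_split hx hθ₁
    have hG2 : Real.Gamma θ₂ = A2 + B2 := gcdf_split hx hθ₂
    have hcd : x ^ (θ₂ - θ₁) * x ^ (θ₁ - θ₂) = 1 := by
      rw [← Real.rpow_add hx]
      norm_num
    have hA : A2 < x ^ (θ₂ - θ₁) * A1 := gcdf_A_lt hx hθ₁ h12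
    have hB : B1 < x ^ (θ₁ - θ₂) * B2 := gcdf_B_lt hx hθ₁ h12
    have hcpos : 0 < x ^ (θ₂ - θ₁) := Real.rpow_pos_of_pos hx _
    have hdpos : 0 < x ^ (θ₁ - θ₂) := Real.rpow_pos_of_pos hx _
    have key : A2 * B1 < A1 * B2 := by
      have h3 : A2 * B1 < (x ^ (θ₂ - θ₁) * A1) * (x ^ (θ₁ - θ₂) * B2) :=
        mul_lt_mul'' hA hB hA2p.le hB1p.le
      calc A2 * B1 < (x ^ (θ₂ - θ₁) * A1) * (x ^ (θ₁ - θ₂) * B2) := h3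
        _ = (x ^ (θ₂ - θ₁) * x ^ (θ₁ - θ₂)) * (A1 * B2) := by ring
        _ = A1 * B2 := by rw [hcd, one_mul]
    rw [hG1, hG2, inv_mul_eq_div, inv_mul_eq_div,
      div_lt_div_iff₀ (by linarith) (by linarith)]
    nlinarith
  have h0 : Tendsto F (𝓝[>] (0 : ℝ)) (𝓝 1) := by
    rw [hFeq]; exact gcdf_tendsto_zero_right hx
  have htop : Tendsto F atTop (𝓝 0) := by
    rw [hFeq]; exact gcdf_tendsto_atTop hx
  refine ⟨hcont, hanti, h0, htop, ?_⟩
  apply Subset.antisymm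
  · rintro y ⟨θ, hθ, rfl⟩
    have hθ0 : (0:ℝ) < θ := hθ
    have hG : 0 < Real.Gamma θ := Real.Gamma_pos_of_pos hθ0
    have hAp := gcdf_A_pos hx hθ0
    have hBp := gcdf_B_pos hx hθ0
    have hsplit := gcdf_split hx hθ0
    constructor
    · rw [hFeq]; positivity
    · rw [hFeq]
      simp only
      rw [inv_mul_eq_div, div_lt_one hG, hsplit]
      linarith
  · intro y hy
    obtain ⟨a, hya, ha0⟩ := ((h0.eventually (eventually_gt_nhds hy.2)).and
      self_mem_nhdsWithin).exists
    have ha0' : (0:ℝ) < a := ha0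
    obtain ⟨b, hby, hab⟩ := ((htop.eventually (eventually_lt_nhds hy.1)).and
      (eventually_ge_atTop a)).exists
    have hsub : Icc a b ⊆ Ioi (0:ℝ) := fun t ht => lt_of_lt_of_le ha0' ht.1
    have hivt := intermediate_value_Icc' hab (hcont.mono hsub)
    have hyIcc : y ∈ Icc (F b) (F a) := ⟨hby.le, hya.le⟩
    obtain ⟨θ, hθ, hθy⟩ := hivt hyIcc
    exact ⟨θ, hsub hθ, hθy⟩
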